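/- Let X be a finite set with exactly 10^100 elements, equipped with a binary relation R (read 'R x y' as 'x respects y'). Call a subset S of X efficient if for any five pairwise distinct elements x₁,…,x₅ of S there is an index i ∈ {1,…,5} such that R x_j x_i holds for at least three indices j ∈ {1,…,5}. Suppose there is a subset E of X with at most 10 elements such that X \ E is efficient. Then there exists a subset E' of X, invariant under every bijection σ of X preserving R (i.e., R x y holds if and only if R (σ x) (σ y) holds, for all x, y), such that X \ E' is efficient and nonempty. -/

import Mathlib

/-- A subset `S` of the candidates is *efficient* if among any five pairwise distinct
members of `S` there is one who is respected (relation `R`) by at least three of the five. -/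
def Efficient {X : Type*} (R : X → X → Prop) (S : Set X) : Prop :=
  ∀ x : Fin 5 → X, Function.Injective x → (∀ i, x i ∈ S) →
    ∃ i : Fin 5, 3 ≤ {j : Fin 5 | R (x j) (x i)}.ncard

/-- A bad 5-tuple: injective and nobody is respected by at least three. -/
def Bad5 {X : Type*} (R : X → X → Prop) (x : Fin 5 → X) : Prop :=
  Function.Injective x ∧ ∀ i : Fin 5, {j : Fin 5 | R (x j) (x i)}.ncard < 3

/-- `F` covers every bad tuple avoiding `A`. -/
def CoversA {X : Type*} (R : X → X → Prop) (A F : Set X) : Prop :=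
  ∀ x : Fin 5 → X, Bad5 R x → (∀ i, x i ∉ A) → ∃ i, x i ∈ F

lemma efficient_iff_covers {X : Type*} (R : X → X → Prop) (F : Set X) :
    Efficient R Fᶜ ↔ CoversA R ∅ F := by
  constructor
  · intro h x hx _
    by_contra hc
    push_neg at hc
    obtain ⟨i, hi⟩ := h x hx.1 (fun i => hc i)
    exact absurd hi (not_le.2 (hx.2 i))
  · intro h x hinj hmem
    by_contra hc
    push_neg at hc
    obtain ⟨i, hi⟩ := h x ⟨hinj, hc⟩ (fun i (h' : x i ∈ (∅ : Set X)) => h')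
    exact hmem i hi

lemma bad5_comp {X : Type*} {R : X → X → Prop} {σ : X → X} (hinj : Function.Injective σ)
    (hRσ : ∀ x y, R x y ↔ R (σ x) (σ y)) {x : Fin 5 → X} (h : Bad5 R x) :
    Bad5 R (σ ∘ x) := by
  refine ⟨hinj.comp h.1, fun i => ?_⟩
  have hset : {j : Fin 5 | R (σ (x j)) (σ (x i))} = {j : Fin 5 | R (x j) (x i)} := by
    ext j; exact (hRσ _ _).symm
  simpa only [Function.comp, hset] using h.2 i

/-- The branching lemma: all minimal small covers live in a small set `W`. -/
lemma union_minimal_bound {X : Type*} [Fintype X] (R : X → X → Prop) :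
    ∀ (k : ℕ) (A : Set X), ∃ W : Set X, W.ncard ≤ 6 ^ k - 1 ∧
      ∀ F : Set X, Minimal (CoversA R A) F → F.ncard ≤ k → F ⊆ W := by
  intro k
  induction k with
  | zero =>
    intro A
    refine ⟨∅, by simp, fun F _ hc => ?_⟩
    have hF : F = ∅ := (Set.ncard_eq_zero F.toFinite).1 (Nat.le_zero.1 hc)
    simp [hF]
  | succ k ih =>
    intro A
    by_cases h : ∃ x : Fin 5 → X, Bad5 R x ∧ ∀ i, x i ∉ A
    · obtain ⟨x₀, hx₀, hx₀A⟩ := h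
      choose W hWcard hW using fun i : Fin 5 => ih (A ∪ {x₀ i})
      refine ⟨Set.range x₀ ∪ ⋃ i, W i, ?_, ?_⟩
      · have h1 : (Set.range x₀).ncard ≤ 5 := by
          have := Set.ncard_image_le (f := x₀) (s := (Set.univ : Set (Fin 5)))
            (Set.toFinite _)
          simpa [Set.image_univ, Set.ncard_univ, Nat.card_eq_fintype_card] using this
        have hUeq : (⋃ i, W i) = W 0 ∪ W 1 ∪ W 2 ∪ W 3 ∪ W 4 := by
          ext v
          simp only [Set.mem_iUnion, Set.mem_union]
          constructor
          · rintro ⟨i, hi⟩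
            fin_cases i <;> tauto
          · rintro ((((h | h) | h) | h) | h)
            exacts [⟨0, h⟩, ⟨1, h⟩, ⟨2, h⟩, ⟨3, h⟩, ⟨4, h⟩]
        have h2 : (⋃ i, W i).ncard ≤ 5 * (6 ^ k - 1) := by
          rw [hUeq]
          have b0 := hWcard 0
          have b1 := hWcard 1
          have b2 := hWcard 2
          have b3 := hWcard 3
          have b4 := hWcard 4
          have u1 := Set.ncard_union_le (W 0 ∪ W 1 ∪ W 2 ∪ W 3) (W 4)
          have u2 := Set.ncard_union_le (W 0 ∪ W 1 ∪ W 2) (W 3)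
          have u3 := Set.ncard_union_le (W 0 ∪ W 1) (W 2)
          have u4 := Set.ncard_union_le (W 0) (W 1)
          omega
        have h4 : (Set.range x₀ ∪ ⋃ i, W i).ncard ≤
            (Set.range x₀).ncard + (⋃ i, W i).ncard := Set.ncard_union_le _ _
        have h6 : (1 : ℕ) ≤ 6 ^ k := Nat.one_le_pow _ _ (by norm_num)
        have h7 : 6 ^ (k + 1) = 6 * 6 ^ k := by ring
        omega
      · intro F hF hcard
        obtain ⟨i, hi⟩ := hF.1 x₀ hx₀ hx₀A
        have hmin : Minimal (CoversA R (A ∪ {x₀ i})) (F \ {x₀ i}) := by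
          constructor
          · intro y hy hyA
            obtain ⟨j, hj⟩ := hF.1 y hy (fun i' h' => hyA i' (Or.inl h'))
            exact ⟨j, hj, fun heq => hyA j (Or.inr heq)⟩
          · intro G hG hGsub
            have hGU : CoversA R A (G ∪ {x₀ i}) := by
              intro y hy hyA
              by_cases hc : ∃ j, y j = x₀ i
              · obtain ⟨j, hj⟩ := hc
                exact ⟨j, Or.inr hj⟩
              · push_neg at hc
                obtain ⟨j, hj⟩ := hG y hy (fun j h' => h'.elim (hyA j) (hc j))
                exact ⟨j, Or.inl hj⟩
            have hsub2 : G ∪ {x₀ i} ⊆ F :=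
              Set.union_subset (hGsub.trans Set.diff_subset) (by simp [hi])
            have hFsub := hF.2 hGU hsub2
            intro v hv
            rcases hFsub hv.1 with h' | h'
            · exact h'
            · exact absurd h' hv.2
        have hcard' : (F \ {x₀ i}).ncard ≤ k := by
          have := Set.ncard_diff_singleton_add_one hi F.toFinite
          omega
        have key : F \ {x₀ i} ⊆ W i := hW i _ hmin hcard'
        intro v hv
        by_cases hvx : v = x₀ i
        · exact Or.inl ⟨i, hvx.symm⟩
        · exact Or.inr (Set.mem_iUnion.2 ⟨i, key ⟨hv, hvx⟩⟩)
    · refine ⟨∅, by simp, fun F hF _ => ?_⟩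
      have hempty : CoversA R A ∅ := fun x hx hxA => absurd ⟨x, hx, hxA⟩ h
      exact hF.2 hempty (Set.empty_subset F)

/-- **Problem 2.** With `10^100` candidates, if expelling some set of at most ten candidates
leaves an efficient team, then there is a set `E'` of candidates, invariant under every
bijection preserving the relation "respects", whose removal leaves a nonempty efficient
team. -/
theorem stmt_19 {X : Type*} [Fintype X] (hcard : Fintype.card X = 10 ^ 100)
    (R : X → X → Prop) (E : Set X) (hE : E.ncard ≤ 10) (heff : Efficient R Eᶜ) :
    ∃ E' : Set X,
      (∀ σ : X → X, Function.Bijective σ → (∀ x y, R x y ↔ R (σ x) (σ y)) →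
        σ '' E' = E') ∧
      Efficient R E'ᶜ ∧ E'ᶜ.Nonempty := by
  classical
  set S : Set (Set X) := {F | Minimal (CoversA R ∅) F ∧ F.ncard ≤ 10} with hS
  -- image of a member of the family under an automorphism stays in the family
  have himg : ∀ (σ : X → X), Function.Bijective σ → (∀ x y, R x y ↔ R (σ x) (σ y)) →
      ∀ F ∈ S, σ '' F ∈ S := by
    intro σ hσ hRσ F hF
    set e : X ≃ X := Equiv.ofBijective σ hσ with he
    have heapp : ∀ x, e x = σ x := fun x => rfl
    have hRτ : ∀ x y, R x y ↔ R (e.symm x) (e.symm y) := by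
      intro x y
      have := hRσ (e.symm x) (e.symm y)
      rw [← heapp, ← heapp, e.apply_symm_apply, e.apply_symm_apply] at this
      exact this.symm
    have hcov : CoversA R ∅ (σ '' F) := by
      intro y hy _
      have hbad : Bad5 R (⇑e.symm ∘ y) := bad5_comp e.symm.injective hRτ hy
      obtain ⟨i, hi⟩ := hF.1.1 (⇑e.symm ∘ y) hbad (fun i h' => h')
      refine ⟨i, ⟨e.symm (y i), hi, ?_⟩⟩
      rw [← heapp, e.apply_symm_apply]
    have hEF : e '' F = σ '' F := rfl
    refine ⟨⟨hcov, ?_⟩, ?_⟩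
    · intro G hG hGsub
      have hcovG : CoversA R ∅ (⇑e.symm '' G) := by
        intro y hy _
        have hbad : Bad5 R (⇑e ∘ y) := bad5_comp e.injective (by simpa [heapp] using hRσ) hy
        obtain ⟨i, hi⟩ := hG (⇑e ∘ y) hbad (fun i h' => h')
        exact ⟨i, ⟨e (y i), hi, e.symm_apply_apply _⟩⟩
      have hsub : ⇑e.symm '' G ⊆ F := by
        have := Set.image_mono (f := ⇑e.symm) hGsub
        rwa [← hEF, e.symm_image_image] at this
      have := hF.1.2 hcovG hsub
      have := Set.image_mono (f := ⇑e) this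
      rwa [hEF, e.image_symm_image] at this
    · have h1 : (σ '' F).ncard = F.ncard := Set.ncard_image_of_injective F hσ.injective
      have h2 : F.ncard ≤ 10 := hF.2
      omega
  -- a minimal cover inside E
  have hcovE : CoversA R ∅ E := (efficient_iff_covers R E).1 heff
  obtain ⟨F₀, hF₀mem, hF₀min⟩ :=
    Set.Finite.exists_minimalFor (id : Set X → Set X)
      {F : Set X | F ⊆ E ∧ CoversA R ∅ F} (Set.toFinite _) ⟨E, subset_rfl, hcovE⟩
  have hF₀ : F₀ ∈ S := by
    refine ⟨⟨hF₀mem.2, ?_⟩, le_trans (Set.ncard_le_ncard hF₀mem.1 E.toFinite) hE⟩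
    intro G hG hGsub
    have hGE : G ∈ {F : Set X | F ⊆ E ∧ CoversA R ∅ F} := ⟨hGsub.trans hF₀mem.1, hG⟩
    have := hF₀min hGE hGsub
    simp only [id] at this
    exact this
  refine ⟨⋃₀ S, ?_, ?_, ?_⟩
  · intro σ hσ hRσ
    apply Set.Subset.antisymm
    · rintro _ ⟨v, ⟨F, hFS, hvF⟩, rfl⟩
      exact ⟨σ '' F, himg σ hσ hRσ F hFS, ⟨v, hvF, rfl⟩⟩
    · rintro v ⟨F, hFS, hvF⟩
      set e : X ≃ X := Equiv.ofBijective σ hσ with he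
      have hRτ : ∀ x y, R x y ↔ R (e.symm x) (e.symm y) := by
        intro x y
        have := hRσ (e.symm x) (e.symm y)
        rw [show σ (e.symm x) = e (e.symm x) from rfl,
          show σ (e.symm y) = e (e.symm y) from rfl,
          e.apply_symm_apply, e.apply_symm_apply] at this
        exact this.symm
      have hFS' : ⇑e.symm '' F ∈ S := himg (⇑e.symm) e.symm.bijective hRτ F hFS
      refine ⟨e.symm v, ⟨⇑e.symm '' F, hFS', ⟨v, hvF, rfl⟩⟩, ?_⟩
      show σ (e.symm v) = v
      exact e.apply_symm_apply v
  · rw [efficient_iff_covers]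
    intro y hy hyA
    obtain ⟨i, hi⟩ := hF₀mem.2 y hy hyA
    exact ⟨i, F₀, hF₀, hi⟩
  · obtain ⟨W, hWcard, hW⟩ := union_minimal_bound R 10 (∅ : Set X)
    have hsub : ⋃₀ S ⊆ W := by
      rintro v ⟨F, ⟨hFmin, hFcard⟩, hvF⟩
      exact hW F hFmin hFcard hvF
    rw [Set.nonempty_compl]
    intro hcontra
    have h1 : (⋃₀ S).ncard ≤ W.ncard := Set.ncard_le_ncard hsub W.toFinite
    have h2 : (⋃₀ S).ncard = 10 ^ 100 := by
      rw [hcontra, Set.ncard_univ, Nat.card_eq_fintype_card, hcard]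
    have : (6 : ℕ) ^ 10 - 1 < 10 ^ 100 := by norm_num
    omega
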